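/- Let V, V_* be vector spaces with pairing ⟨·,·⟩, and {ℂvᵢ, ℂvⁱ}_{i∈ℕ} a dual system (⟨vᵢ,vʲ⟩ = δᵢⱼ) with complements X, Y and functionals λᵢ, μᵢ as above. Suppose the compatible complement datum is not maximal: there exist x ∈ X₀, y ∈ Y₀ with ω̃(x,y) = 1. Then v₀ := x − Σⱼ λⱼ(x)vⱼ and v⁰ := y − Σₖ μₖ(y)vᵏ (finite sums since x ∈ X₀, y ∈ Y₀) satisfy ⟨v₀, vⁱ⟩ = 0 and ⟨vᵢ, v⁰⟩ = 0 for all i ≥ 1, and ⟨v₀, v⁰⟩ = 1; hence the dual system extends to a strictly larger dual system and is not maximal. -/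
import Mathlib


/-- If the complement datum associated to a dual system `{ℂvᵢ, ℂvⁱ}` is not maximal,
witnessed by `x ∈ X₀`, `y ∈ Y₀` with `ω̃(x,y) = 1`, then `v₀ := x − Σ λⱼ(x) vⱼ` and
`v⁰ := y − Σ μₖ(y) vᵏ` extend the dual system: `⟨v₀, vⁱ⟩ = 0`, `⟨vᵢ, v⁰⟩ = 0`, and
`⟨v₀, v⁰⟩ = 1`; hence the dual system is not maximal. -/
theorem stmt17 (V Vs : Type*) [AddCommGroup V] [Module ℂ V] [AddCommGroup Vs] [Module ℂ Vs]
    (B : V →ₗ[ℂ] Vs →ₗ[ℂ] ℂ)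
    (v : ℕ → V) (vs : ℕ → Vs)
    (hdual : ∀ i j, B (v i) (vs j) = if i = j then 1 else 0)
    (x : V) (y : Vs)
    (hx : {i : ℕ | B x (vs i) ≠ 0}.Finite) (hy : {i : ℕ | B (v i) y ≠ 0}.Finite)
    (homega : B x y - ∑ᶠ i, B x (vs i) * B (v i) y = 1)
    (v0 : V) (hv0 : v0 = x - ∑ᶠ j, B x (vs j) • v j)
    (v0s : Vs) (hv0s : v0s = y - ∑ᶠ k, B (v k) y • vs k) :
    (∀ i, B v0 (vs i) = 0) ∧ (∀ i, B (v i) v0s = 0) ∧ B v0 v0s = 1 := by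
  classical
  set S := hx.toFinset with hS
  set T := hy.toFinset with hT
  have hsumv : (∑ᶠ j, B x (vs j) • v j) = ∑ j ∈ S, B x (vs j) • v j := by
    refine finsum_eq_finset_sum_of_support_subset _ ?_
    intro j hj
    simp only [Function.mem_support] at hj
    simp only [hS, Set.Finite.coe_toFinset, Set.mem_setOf_eq]
    intro h; exact hj (by rw [h, zero_smul])
  have hsumvs : (∑ᶠ k, B (v k) y • vs k) = ∑ k ∈ T, B (v k) y • vs k := by
    refine finsum_eq_finset_sum_of_support_subset _ ?_
    intro k hk
    simp only [Function.mem_support] at hk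
    simp only [hT, Set.Finite.coe_toFinset, Set.mem_setOf_eq]
    intro h; exact hk (by rw [h, zero_smul])
  have homega' : B x y - ∑ j ∈ S, B x (vs j) * B (v j) y = 1 := by
    rw [← homega]
    congr 1
    refine (finsum_eq_finset_sum_of_support_subset _ ?_).symm
    intro j hj
    simp only [Function.mem_support] at hj
    simp only [hS, Set.Finite.coe_toFinset, Set.mem_setOf_eq]
    intro h; exact hj (by rw [h, zero_mul])
  have h1 : ∀ i, B v0 (vs i) = 0 := by
    intro i
    have e : B v0 (vs i) = B x (vs i) - ∑ j ∈ S, B x (vs j) * B (v j) (vs i) := by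
      rw [hv0, hsumv]
      simp [LinearMap.sum_apply, mul_comm]
    rw [e]
    simp only [hdual, mul_ite, mul_one, mul_zero, Finset.sum_ite_eq' S]
    by_cases hi : i ∈ S
    · simp [hi]
    · have hBi : B x (vs i) = 0 := by
        by_contra h; exact hi (by simp [hS, h])
      simp [hi, hBi]
  have h2 : ∀ i, B (v i) v0s = 0 := by
    intro i
    have e : B (v i) v0s = B (v i) y - ∑ k ∈ T, B (v k) y * B (v i) (vs k) := by
      rw [hv0s, hsumvs]
      simp [mul_comm]
    rw [e]
    simp only [hdual, mul_ite, mul_one, mul_zero, Finset.sum_ite_eq T]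
    by_cases hi : i ∈ T
    · simp [hi]
    · have hBi : B (v i) y = 0 := by
        by_contra h; exact hi (by simp [hT, h])
      simp [hi, hBi]
  refine ⟨h1, h2, ?_⟩
  have e1 : B v0 v0s = B v0 y - ∑ k ∈ T, B (v k) y * B v0 (vs k) := by
    rw [hv0s, hsumvs]
    simp [mul_comm]
  have e2 : B v0 y = B x y - ∑ j ∈ S, B x (vs j) * B (v j) y := by
    rw [hv0, hsumv]
    simp [LinearMap.sum_apply, mul_comm]
  rw [e1, Finset.sum_eq_zero (fun k _ => by rw [h1 k, mul_zero]), sub_zero, e2]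
  exact homega'
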